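/- Let K be a field of characteristic zero and let P : K^n → K be a bisymmetric polynomial function of degree at most 2. Then P is univariate (P(x) = u(x_i) for some index i and univariate polynomial u), or P has degree ≤ 1, or there exist a, b ∈ K and α ∈ ℕ^n with |α| = 2 such that P(x) = a·∏_{i=1}^n (x_i + b)^{α_i} − b. -/

import Mathlib

/-- A function `f : S^n → S` is bisymmetric if for every `n × n` matrix `X` over `S`,
applying `f` to the rows and then to the results equals applying `f` to the columns
and then to the results. -/
def Bisym {S : Type*} {n : ℕ} (f : (Fin n → S) → S) : Prop :=
  ∀ X : Fin n → Fin n → S,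
    f (fun i => f (X i)) = f (fun j => f (fun i => X i j))


open Finset MvPolynomial

namespace BisymAux


variable {K : Type*} [Field K] {n : ℕ}

/-- linear form -/
def Bfun (b : Fin n → K) (x : Fin n → K) : K := ∑ p, b p * x p

/-- bilinear form -/
def Qfun (A : Fin n → Fin n → K) (x y : Fin n → K) : K := ∑ p, ∑ q, A p q * x p * y q

/-- coordinatewise square -/
def sqv (x : Fin n → K) : Fin n → K := fun i => x i * x i

/-- all ones -/
def onev : Fin n → K := fun _ => 1

lemma Bfun_scale (b : Fin n → K) (t : K) (x : Fin n → K) :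
    Bfun b (fun i => t * x i) = t * Bfun b x := by
  rw [Bfun, Bfun, Finset.mul_sum]
  exact Finset.sum_congr rfl fun p _ => by ring

lemma Qfun_scale_left (A : Fin n → Fin n → K) (t : K) (x y : Fin n → K) :
    Qfun A (fun i => t * x i) y = t * Qfun A x y := by
  rw [Qfun, Qfun, Finset.mul_sum]
  refine Finset.sum_congr rfl fun p _ => ?_
  rw [Finset.mul_sum]
  exact Finset.sum_congr rfl fun q _ => by ring

lemma Qfun_scale_right (A : Fin n → Fin n → K) (t : K) (x y : Fin n → K) :
    Qfun A x (fun i => t * y i) = t * Qfun A x y := by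
  rw [Qfun, Qfun, Finset.mul_sum]
  refine Finset.sum_congr rfl fun p _ => ?_
  rw [Finset.mul_sum]
  exact Finset.sum_congr rfl fun q _ => by ring

lemma sqv_scale (t : K) (x : Fin n → K) :
    sqv (fun i => t * x i) = fun i => (t * t) * sqv x i := by
  funext i; simp [sqv]; ring

lemma Bfun_add (b x y : Fin n → K) :
    Bfun b (x + y) = Bfun b x + Bfun b y := by
  rw [Bfun, Bfun, Bfun, ← Finset.sum_add_distrib]
  exact Finset.sum_congr rfl fun p _ => by simp [Pi.add_apply]; ring

lemma Qfun_add_left (A : Fin n → Fin n → K) (x x' y : Fin n → K) :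
    Qfun A (x + x') y = Qfun A x y + Qfun A x' y := by
  rw [Qfun, Qfun, Qfun, ← Finset.sum_add_distrib]
  refine Finset.sum_congr rfl fun p _ => ?_
  rw [← Finset.sum_add_distrib]
  exact Finset.sum_congr rfl fun q _ => by simp [Pi.add_apply]; ring

lemma Qfun_add_right (A : Fin n → Fin n → K) (x y y' : Fin n → K) :
    Qfun A x (y + y') = Qfun A x y + Qfun A x y' := by
  rw [Qfun, Qfun, Qfun, ← Finset.sum_add_distrib]
  refine Finset.sum_congr rfl fun p _ => ?_
  rw [← Finset.sum_add_distrib]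
  exact Finset.sum_congr rfl fun q _ => by simp [Pi.add_apply]; ring

lemma Bfun_single (b : Fin n → K) (k : Fin n) (s : K) :
    Bfun b (Pi.single k s) = b k * s := by
  rw [Bfun]
  rw [Finset.sum_eq_single k]
  · simp
  · intro p _ hp; simp [Pi.single_apply, hp]
  · intro h; exact absurd (Finset.mem_univ k) h

lemma Qfun_single_single (A : Fin n → Fin n → K) (k l : Fin n) (s t : K) :
    Qfun A (Pi.single k s) (Pi.single l t) = A k l * s * t := by
  rw [Qfun]
  rw [Finset.sum_eq_single k]
  · rw [Finset.sum_eq_single l]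
    · simp
    · intro q _ hq; simp [Pi.single_apply, hq]
    · intro h; exact absurd (Finset.mem_univ l) h
  · intro p _ hp; apply Finset.sum_eq_zero; intro q _; simp [Pi.single_apply, hp]
  · intro h; exact absurd (Finset.mem_univ k) h

lemma sqv_single (k : Fin n) (s : K) :
    sqv (Pi.single k s) = Pi.single k (s * s) := by
  funext i
  simp only [sqv, Pi.single_apply]
  split_ifs <;> simp

lemma sqv_add_of_disjoint (x y : Fin n → K) (h : ∀ i, x i * y i = 0) :
    sqv (x + y) = sqv x + sqv y := by
  funext i
  have := h i
  simp only [sqv, Pi.add_apply]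
  linear_combination (2:K) * this



variable {n : ℕ}

lemma sum_one_cases (s : Finset (Fin n)) (v : Fin n → ℕ) (h : ∑ i ∈ s, v i = 1) :
    ∃ k ∈ s, v k = 1 ∧ ∀ i ∈ s, i ≠ k → v i = 0 := by
  have hex : ∃ k ∈ s, v k ≠ 0 := by
    by_contra hc
    push_neg at hc
    rw [Finset.sum_eq_zero hc] at h
    exact one_ne_zero h.symm
  obtain ⟨k, hks, hk⟩ := hex
  have hle : v k ≤ 1 := h ▸ Finset.single_le_sum (fun i _ => Nat.zero_le _) hks
  have hvk : v k = 1 := le_antisymm hle (Nat.one_le_iff_ne_zero.2 hk)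
  refine ⟨k, hks, hvk, ?_⟩
  have he : ∑ i ∈ s.erase k, v i = 0 := by
    have := Finset.add_sum_erase s v hks
    omega
  intro i his hik
  exact (Finset.sum_eq_zero_iff.1 he) i (Finset.mem_erase.2 ⟨hik, his⟩)

lemma finsupp_sum_le_two_cases (v : Fin n →₀ ℕ) (h : ∑ i, v i ≤ 2) :
    v = 0 ∨ (∃ k, v = Finsupp.single k 1) ∨ (∃ k, v = Finsupp.single k 2) ∨
      (∃ k l, k ≠ l ∧ v = Finsupp.single k 1 + Finsupp.single l 1) := by
  interval_cases hs : (∑ i, v i)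
  · left
    ext i
    exact (Finset.sum_eq_zero_iff.1 hs) i (Finset.mem_univ i)
  · right; left
    obtain ⟨k, -, hk1, hk0⟩ := sum_one_cases Finset.univ v hs
    refine ⟨k, ?_⟩
    ext i
    rw [Finsupp.single_apply]
    by_cases hik : k = i
    · subst hik; simpa using hk1
    · simp only [hik, if_false]
      exact hk0 i (Finset.mem_univ i) (fun hh => hik hh.symm)
  · right; right
    have hex : ∃ k ∈ Finset.univ, v k ≠ 0 := by
      by_contra hc
      push_neg at hc
      rw [Finset.sum_eq_zero hc] at hs
      omega
    obtain ⟨k, hks, hk⟩ := hex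
    have hle : v k ≤ 2 := hs ▸ Finset.single_le_sum (fun i _ => Nat.zero_le _) hks
    have he : v k + ∑ i ∈ Finset.univ.erase k, v i = 2 := by
      rw [Finset.add_sum_erase Finset.univ v hks]; exact hs
    rcases Nat.lt_or_ge (v k) 2 with h1 | h2
    · -- v k = 1
      have hvk : v k = 1 := by omega
      have he1 : ∑ i ∈ Finset.univ.erase k, v i = 1 := by omega
      obtain ⟨l, hls, hl1, hl0⟩ := sum_one_cases _ v he1
      have hlk : l ≠ k := (Finset.mem_erase.1 hls).1
      right
      refine ⟨k, l, fun hh => hlk hh.symm, ?_⟩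
      ext i
      rw [Finsupp.coe_add, Pi.add_apply, Finsupp.single_apply, Finsupp.single_apply]
      by_cases hik : k = i
      · subst hik
        rw [if_pos rfl, if_neg (fun hh : l = k => hlk hh), hvk]
        omega
      · by_cases hil : l = i
        · subst hil
          rw [if_neg hik, if_pos rfl, hl1]
        · simp only [if_neg hik, if_neg hil]
          refine hl0 i (Finset.mem_erase.2 ⟨fun hh => hik hh.symm, Finset.mem_univ i⟩)
            (fun hh => hil hh.symm)
    · -- v k = 2
      have hvk : v k = 2 := le_antisymm hle h2
      have he0 : ∑ i ∈ Finset.univ.erase k, v i = 0 := by omega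
      left
      refine ⟨k, ?_⟩
      ext i
      rw [Finsupp.single_apply]
      by_cases hik : k = i
      · subst hik; simpa using hvk
      · simp only [hik, if_false]
        exact (Finset.sum_eq_zero_iff.1 he0) i
          (Finset.mem_erase.2 ⟨fun hh => hik hh.symm, Finset.mem_univ i⟩)



variable {K : Type*} [Field K] [CharZero K] {n : ℕ}


lemma degsum_single (k : Fin n) (m : ℕ) : ∑ i, Finsupp.single k m i = m := by
  rw [Finset.sum_eq_single k]
  · simp
  · intro i _ hik; rw [Finsupp.single_apply, if_neg (fun h => hik h.symm)]
  · intro h; exact absurd (Finset.mem_univ k) h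

lemma C_mul_X (a : K) (k : Fin n) :
    C a * X k = monomial (Finsupp.single k 1) a := by
  rw [MvPolynomial.X, MvPolynomial.C_apply, MvPolynomial.monomial_mul, zero_add, mul_one]

lemma C_mul_XX (a : K) (p q : Fin n) :
    C a * (X p * X q) = monomial (Finsupp.single p 1 + Finsupp.single q 1) a := by
  rw [MvPolynomial.X, MvPolynomial.X, MvPolynomial.monomial_mul, MvPolynomial.C_apply,
    MvPolynomial.monomial_mul, zero_add]
  norm_num

lemma double_sum_ite (g : Fin n → Fin n → K) (k0 l0 : Fin n) :
    ∑ p, ∑ q, (if p = k0 ∧ q = l0 then g p q else 0) = g k0 l0 := by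
  have h : ∀ p : Fin n, ∑ q, (if p = k0 ∧ q = l0 then g p q else 0)
      = if p = k0 then g p l0 else 0 := by
    intro p
    by_cases hp : p = k0
    · subst hp
      rw [if_pos rfl]
      rw [Finset.sum_eq_single l0] <;> simp +contextual
    · rw [if_neg hp]
      apply Finset.sum_eq_zero
      intro q _
      rw [if_neg (fun h => hp h.1)]
  rw [Finset.sum_congr rfl (fun p _ => h p)]
  rw [Finset.sum_eq_single k0] <;> simp +contextual

theorem exists_expansion (P : MvPolynomial (Fin n) K) (hdeg : P.totalDegree ≤ 2) :
    ∃ (c : K) (b : Fin n → K) (A : Fin n → Fin n → K),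
      (∀ p q, A p q = A q p) ∧
      (∀ x : Fin n → K, MvPolynomial.eval x P = c + Bfun b x + Qfun A x x) ∧
      ((∀ p q, A p q = 0) → P.totalDegree ≤ 1) := by
  classical
  set c : K := coeff 0 P with hc
  set b : Fin n → K := fun k => coeff (Finsupp.single k 1) P with hb
  set A : Fin n → Fin n → K := fun p q =>
    if p = q then coeff (Finsupp.single p 2) P
    else coeff (Finsupp.single p 1 + Finsupp.single q 1) P / 2 with hA
  have hdegv : ∀ v : Fin n →₀ ℕ, (v.sum fun _ e => e) = ∑ i, v i := by
    intro v
    exact Finsupp.sum_fintype v _ (fun _ => rfl)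
  have hsupdeg : ∀ v ∈ P.support, ∑ i, v i ≤ 2 := by
    intro v hv
    rw [← hdegv]
    exact le_trans (MvPolynomial.le_totalDegree hv) hdeg
  have hbig : ∀ v : Fin n →₀ ℕ, 2 < ∑ i, v i → coeff v P = 0 := by
    intro v hv
    by_contra hco
    exact absurd (hsupdeg v (MvPolynomial.mem_support_iff.2 hco)) (by omega)
  have hAsymm : ∀ p q, A p q = A q p := by
    intro p q
    by_cases hpq : p = q
    · subst hpq; rfl
    · rw [hA]
      simp only [if_neg hpq, if_neg (Ne.symm hpq)]
      rw [add_comm]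
  -- the structural identity
  have hP : P = C c + (∑ k, C (b k) * X k) + (∑ p, ∑ q, C (A p q) * (X p * X q)) := by
    apply MvPolynomial.ext
    intro v
    rw [MvPolynomial.coeff_add, MvPolynomial.coeff_add, MvPolynomial.coeff_C]
    rw [MvPolynomial.coeff_sum]
    simp_rw [MvPolynomial.coeff_sum]
    simp_rw [C_mul_X, C_mul_XX, MvPolynomial.coeff_monomial]
    rcases Nat.lt_or_ge 2 (∑ i, v i) with hgt | hle
    · -- high degree : everything is 0
      rw [hbig v hgt]
      have h0 : ¬((0 : Fin n →₀ ℕ) = v) := by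
        intro h; rw [← h] at hgt; simp at hgt
      rw [if_neg h0]
      have h1 : ∀ k : Fin n, ¬(Finsupp.single k 1 = v) := by
        intro k h; rw [← h, degsum_single] at hgt; omega
      have h2 : ∀ p q : Fin n, ¬(Finsupp.single p 1 + Finsupp.single q 1 = v) := by
        intro p q h
        rw [← h] at hgt
        simp only [Finsupp.coe_add, Pi.add_apply, Finset.sum_add_distrib, degsum_single] at hgt
        omega
      simp only [h1, if_false, h2, Finset.sum_const_zero, add_zero]
    · -- low degree: case analysis
      rcases finsupp_sum_le_two_cases v hle with h0 | ⟨k0, h1⟩ | ⟨k0, h2⟩ | ⟨k0, l0, hkl, h3⟩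
      · subst h0
        rw [if_pos rfl]
        have h1 : ∀ k : Fin n, ¬(Finsupp.single k 1 = 0) := by
          intro k h
          have := congrArg (fun w => w k) h
          simp at this
        have h2 : ∀ p q : Fin n, ¬(Finsupp.single p 1 + Finsupp.single q 1 = 0) := by
          intro p q h
          have := congrArg (fun w : Fin n →₀ ℕ => w p) h
          simp [Finsupp.single_apply] at this
        simp only [h1, if_false, h2, Finset.sum_const_zero, add_zero]
        exact hc.symm
      · subst h1
        have h0 : ¬((0 : Fin n →₀ ℕ) = Finsupp.single k0 1) := by
          intro h
          have := congrArg (fun w : Fin n →₀ ℕ => w k0) h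
          simp at this
        rw [if_neg h0]
        have h2 : ∀ p q : Fin n, ¬(Finsupp.single p 1 + Finsupp.single q 1
            = Finsupp.single k0 1) := by
          intro p q h
          have := congrArg (fun w : Fin n →₀ ℕ => ∑ i, w i) h
          simp only [Finsupp.coe_add, Pi.add_apply, Finset.sum_add_distrib,
            degsum_single] at this
          omega
        have hsing : ∀ k : Fin n, (Finsupp.single k 1 = Finsupp.single k0 1) ↔ k = k0 := by
          intro k
          rw [Finsupp.single_eq_single_iff]
          constructor
          · rintro (⟨h, -⟩ | ⟨h, -⟩); exact h; exact absurd h one_ne_zero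
          · intro h; exact Or.inl ⟨h, rfl⟩
        simp only [hsing, h2, if_false, Finset.sum_const_zero, add_zero, zero_add]
        rw [Finset.sum_ite_eq' Finset.univ k0 b]
        simp [hb]
      · subst h2
        have h0 : ¬((0 : Fin n →₀ ℕ) = Finsupp.single k0 2) := by
          intro h
          have := congrArg (fun w : Fin n →₀ ℕ => w k0) h
          simp at this
        rw [if_neg h0]
        have h1 : ∀ k : Fin n, ¬(Finsupp.single k 1 = Finsupp.single k0 2) := by
          intro k h
          have := congrArg (fun w : Fin n →₀ ℕ => ∑ i, w i) h
          simp only [degsum_single] at this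
          omega
        have h2 : ∀ p q : Fin n, (Finsupp.single p 1 + Finsupp.single q 1
            = Finsupp.single k0 2) ↔ (p = k0 ∧ q = k0) := by
          intro p q
          constructor
          · intro h
            have hp := congrArg (fun w : Fin n →₀ ℕ => w p) h
            have hq := congrArg (fun w : Fin n →₀ ℕ => w q) h
            simp only [Finsupp.coe_add, Pi.add_apply, Finsupp.single_apply] at hp hq
            constructor
            · by_contra hpk
              rw [if_neg (fun h' : k0 = p => hpk h'.symm)] at hp
              split_ifs at hp <;> omega
            · by_contra hqk
              rw [if_neg (fun h' : k0 = q => hqk h'.symm)] at hq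
              split_ifs at hq <;> omega
          · rintro ⟨rfl, rfl⟩
            rw [← Finsupp.single_add]
        simp only [h1, if_false, Finset.sum_const_zero, zero_add, h2]
        rw [double_sum_ite (fun p q => A p q) k0 k0]
        simp [hA]
      · subst h3
        have hdv : ∑ i, ((Finsupp.single k0 1 + Finsupp.single l0 1 : Fin n →₀ ℕ)) i = 2 := by
          simp only [Finsupp.coe_add, Pi.add_apply, Finset.sum_add_distrib, degsum_single]
        have h0 : ¬((0 : Fin n →₀ ℕ) = Finsupp.single k0 1 + Finsupp.single l0 1) := by
          intro h
          rw [← h] at hdv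
          simp at hdv
        rw [if_neg h0]
        have h1 : ∀ k : Fin n, ¬(Finsupp.single k 1
            = Finsupp.single k0 1 + Finsupp.single l0 1) := by
          intro k h
          rw [← h, degsum_single] at hdv
          omega
        have h2 : ∀ p q : Fin n, (Finsupp.single p 1 + Finsupp.single q 1
            = Finsupp.single k0 1 + Finsupp.single l0 1)
            ↔ ((p = k0 ∧ q = l0) ∨ (p = l0 ∧ q = k0)) := by
          intro p q
          constructor
          · intro h
            have hpq : p ≠ q := by
              intro hpq
              subst hpq
              have hp := congrArg (fun w : Fin n →₀ ℕ => w p) h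
              simp only [Finsupp.coe_add, Pi.add_apply, Finsupp.single_apply] at hp
              by_cases hk : k0 = p
              · rw [if_pos hk, if_neg (fun h' : l0 = p => hkl (hk.trans h'.symm))] at hp
                split_ifs at hp <;> omega
              · rw [if_neg hk] at hp
                split_ifs at hp <;> omega
            have hp := congrArg (fun w : Fin n →₀ ℕ => w p) h
            have hq := congrArg (fun w : Fin n →₀ ℕ => w q) h
            simp only [Finsupp.coe_add, Pi.add_apply, Finsupp.single_apply] at hp hq
            rw [if_neg (fun h' : q = p => hpq h'.symm)] at hp
            rw [if_neg (fun h' : p = q => hpq h')] at hq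
            have hpk : p = k0 ∨ p = l0 := by
              by_contra hcon
              push_neg at hcon
              rw [if_neg (fun h' : k0 = p => hcon.1 h'.symm),
                if_neg (fun h' : l0 = p => hcon.2 h'.symm)] at hp
              split_ifs at hp <;> omega
            have hqk : q = k0 ∨ q = l0 := by
              by_contra hcon
              push_neg at hcon
              rw [if_neg (fun h' : k0 = q => hcon.1 h'.symm),
                if_neg (fun h' : l0 = q => hcon.2 h'.symm)] at hq
              split_ifs at hq <;> omega
            rcases hpk with rfl | rfl
            · rcases hqk with rfl | rfl
              · exact absurd rfl hpq
              · exact Or.inl ⟨rfl, rfl⟩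
            · rcases hqk with rfl | rfl
              · exact Or.inr ⟨rfl, rfl⟩
              · exact absurd rfl hpq
          · rintro (⟨rfl, rfl⟩ | ⟨rfl, rfl⟩)
            · rfl
            · rw [add_comm]
        simp only [h1, if_false, Finset.sum_const_zero, zero_add, h2]
        have hsplit : ∀ p q : Fin n,
            (if ((p = k0 ∧ q = l0) ∨ (p = l0 ∧ q = k0)) then A p q else 0)
            = (if (p = k0 ∧ q = l0) then A p q else 0)
              + (if (p = l0 ∧ q = k0) then A p q else 0) := by
          intro p q
          by_cases h1' : (p = k0 ∧ q = l0)
          · have h2' : ¬(p = l0 ∧ q = k0) := by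
              rintro ⟨rfl, rfl⟩
              exact hkl h1'.1.symm
            rw [if_pos (Or.inl h1'), if_pos h1', if_neg h2', add_zero]
          · by_cases h2' : (p = l0 ∧ q = k0)
            · rw [if_pos (Or.inr h2'), if_neg h1', if_pos h2', zero_add]
            · rw [if_neg (by tauto), if_neg h1', if_neg h2', add_zero]
        simp_rw [hsplit, Finset.sum_add_distrib]
        rw [double_sum_ite (fun p q => A p q) k0 l0, double_sum_ite (fun p q => A p q) l0 k0]
        rw [hA]
        simp only [if_neg hkl, if_neg (Ne.symm hkl)]
        rw [add_comm (Finsupp.single l0 1) (Finsupp.single k0 1)]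
        ring
  refine ⟨c, b, A, hAsymm, ?_, ?_⟩
  · intro x
    conv_lhs => rw [hP]
    simp only [map_add, MvPolynomial.eval_C, MvPolynomial.eval_sum, MvPolynomial.eval_mul,
      MvPolynomial.eval_X]
    rw [Bfun, Qfun]
    congr 1
    refine Finset.sum_congr rfl fun p _ => Finset.sum_congr rfl fun q _ => by ring
  · intro hA0
    rw [MvPolynomial.totalDegree]
    apply Finset.sup_le
    intro v hv
    rw [hdegv]
    rcases finsupp_sum_le_two_cases v (hsupdeg v hv) with h0 | ⟨k0, h1⟩ | ⟨k0, h2⟩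
      | ⟨k0, l0, hkl, h3⟩
    · subst h0; simp
    · subst h1; rw [degsum_single]
    · exfalso
      have := hA0 k0 k0
      rw [hA] at this
      simp only [if_pos rfl] at this
      subst h2
      exact (MvPolynomial.mem_support_iff.1 hv) this
    · exfalso
      have := hA0 k0 l0
      rw [hA] at this
      simp only [if_neg hkl] at this
      have hz : coeff (Finsupp.single k0 1 + Finsupp.single l0 1) P = 0 := by
        field_simp at this
        simpa using this
      subst h3
      exact (MvPolynomial.mem_support_iff.1 hv) hz


section KeyExpand

variable {K : Type*} [Field K] {n : ℕ}

lemma key_expand_B (b v : Fin n → K) (α β γ : K) :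
    Bfun b (fun i => α + β * v i + γ * (v i * v i))
      = α * Bfun b onev + β * Bfun b v + γ * Bfun b (sqv v) := by
  simp only [Bfun, onev, sqv, Finset.mul_sum, ← Finset.sum_add_distrib]
  exact Finset.sum_congr rfl fun p _ => by ring

lemma key_expand_Q (A : Fin n → Fin n → K) (v : Fin n → K) (α β γ : K) :
    Qfun A (fun i => α + β * v i + γ * (v i * v i)) (fun i => α + β * v i + γ * (v i * v i))
      = α * α * Qfun A onev onev
        + α * β * Qfun A onev v + α * γ * Qfun A onev (sqv v)
        + α * β * Qfun A v onev + β * β * Qfun A v v + β * γ * Qfun A v (sqv v)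
        + α * γ * Qfun A (sqv v) onev + β * γ * Qfun A (sqv v) v
        + γ * γ * Qfun A (sqv v) (sqv v) := by
  simp only [Qfun, onev, sqv, Finset.mul_sum, ← Finset.sum_add_distrib]
  exact Finset.sum_congr rfl fun p _ => Finset.sum_congr rfl fun q _ => by ring

lemma single_disjoint {k l : Fin n} (hkl : k ≠ l) (s t : K) :
    ∀ i, (Pi.single k s : Fin n → K) i * (Pi.single l t : Fin n → K) i = 0 := by
  intro i
  rw [Pi.single_apply, Pi.single_apply]
  rcases eq_or_ne i k with rfl | hik
  · rw [if_neg (fun h : i = l => hkl h), mul_zero]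
  · rw [if_neg hik, zero_mul]

lemma Qfun_onev_single (A : Fin n → Fin n → K) (k : Fin n) (s : K) :
    Qfun A onev (Pi.single k s) = (∑ p, A p k) * s := by
  rw [Qfun, Finset.sum_mul]
  refine Finset.sum_congr rfl fun p _ => ?_
  rw [Finset.sum_eq_single k]
  · simp [onev]
  · intro q _ hq
    rw [Pi.single_apply, if_neg hq, mul_zero]
  · intro h; exact absurd (Finset.mem_univ k) h

lemma Qfun_single_onev (A : Fin n → Fin n → K) (k : Fin n) (s : K) :
    Qfun A (Pi.single k s) onev = (∑ q, A k q) * s := by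
  rw [Qfun, Finset.sum_eq_single k]
  · rw [Finset.sum_mul]
    refine Finset.sum_congr rfl fun q _ => ?_
    simp [onev]
  · intro p _ hp
    apply Finset.sum_eq_zero
    intro q _
    rw [Pi.single_apply, if_neg hp, mul_zero, zero_mul]
  · intro h; exact absurd (Finset.mem_univ k) h

end KeyExpand


lemma relations {K : Type*} [Field K] [CharZero K] {n : ℕ}
    (A : Fin n → Fin n → K) (hAs : ∀ p q, A p q = A q p) (lam : K)
    (R2 : ∀ y : Fin n → K, Qfun A y y * Qfun A y y = lam * Qfun A (sqv y) (sqv y)) :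
    (∀ k, A k k * A k k = lam * A k k) ∧
    (∀ k l : Fin n, k ≠ l → A k k * A k l = 0) ∧
    (∀ k l : Fin n, k ≠ l → A k k * A l l + 2 * (A k l * A k l) = lam * A k l) ∧
    (∀ k l m : Fin n, k ≠ l → k ≠ m → l ≠ m →
      A k k * A l m + 2 * (A k l * A k m) = 0) ∧
    (∀ k l m p : Fin n, k ≠ l → k ≠ m → k ≠ p → l ≠ m → l ≠ p → m ≠ p →
      A k l * A m p + A k m * A l p + A k p * A l m = 0) := by
  classical
  refine ⟨?_, ?_, ?_, ?_, ?_⟩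
  · intro k
    have h := R2 (Pi.single k (1:K))
    rw [sqv_single] at h
    simp only [Qfun_single_single] at h
    linear_combination h
  · intro k l hkl
    have inst : ∀ s : K,
        (A k k * s * s + A k l * s * (1:K) + A l k * (1:K) * s + A l l * (1:K) * (1:K)) * (A k k * s * s + A k l * s * (1:K) + A l k * (1:K) * s + A l l * (1:K) * (1:K))
          = lam * (A k k * (s * s) * (s * s) + A k l * (s * s) * ((1:K) * (1:K)) + A l k * ((1:K) * (1:K)) * (s * s) + A l l * ((1:K) * (1:K)) * ((1:K) * (1:K))) := by
      intro s
      have h := R2 (Pi.single k s + Pi.single l (1:K))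
      rw [sqv_add_of_disjoint _ _ (single_disjoint hkl s 1), sqv_single, sqv_single] at h
      simp only [Qfun_add_left, Qfun_add_right, Qfun_single_single] at h
      linear_combination h
    have e1 := inst 1
    have em1 := inst (-1)
    have e2 := inst 2
    have em2 := inst (-2)
    simp only [hAs l k] at e1 em1 e2 em2
    linear_combination (e2 - em2 - 2 * e1 + 2 * em1) / 48
  · intro k l hkl
    have inst : ∀ s : K,
        (A k k * s * s + A k l * s * (1:K) + A l k * (1:K) * s + A l l * (1:K) * (1:K)) * (A k k * s * s + A k l * s * (1:K) + A l k * (1:K) * s + A l l * (1:K) * (1:K))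
          = lam * (A k k * (s * s) * (s * s) + A k l * (s * s) * ((1:K) * (1:K)) + A l k * ((1:K) * (1:K)) * (s * s) + A l l * ((1:K) * (1:K)) * ((1:K) * (1:K))) := by
      intro s
      have h := R2 (Pi.single k s + Pi.single l (1:K))
      rw [sqv_add_of_disjoint _ _ (single_disjoint hkl s 1), sqv_single, sqv_single] at h
      simp only [Qfun_add_left, Qfun_add_right, Qfun_single_single] at h
      linear_combination h
    have e0 := inst 0
    have e1 := inst 1
    have em1 := inst (-1)
    have e2 := inst 2
    have em2 := inst (-2)
    simp only [hAs l k] at e0 e1 em1 e2 em2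
    linear_combination (16 * (e1 + em1) - (e2 + em2) - 30 * e0) / 48
  · intro k l m hkl hkm hlm
    have inst : ∀ s t : K,
        (A k k * s * s + A k l * s * t + A k m * s * (1:K) + A l k * t * s + A l l * t * t + A l m * t * (1:K) + A m k * (1:K) * s + A m l * (1:K) * t + A m m * (1:K) * (1:K)) * (A k k * s * s + A k l * s * t + A k m * s * (1:K) + A l k * t * s + A l l * t * t + A l m * t * (1:K) + A m k * (1:K) * s + A m l * (1:K) * t + A m m * (1:K) * (1:K))
          = lam * (A k k * (s * s) * (s * s) + A k l * (s * s) * (t * t) + A k m * (s * s) * ((1:K) * (1:K)) + A l k * (t * t) * (s * s) + A l l * (t * t) * (t * t) + A l m * (t * t) * ((1:K) * (1:K)) + A m k * ((1:K) * (1:K)) * (s * s) + A m l * ((1:K) * (1:K)) * (t * t) + A m m * ((1:K) * (1:K)) * ((1:K) * (1:K))) := by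
      intro s t
      have h := R2 (Pi.single k s + Pi.single l t + Pi.single m (1:K))
      have hd1 : ∀ i, (Pi.single k s + Pi.single l t : Fin n → K) i
          * (Pi.single m (1:K) : Fin n → K) i = 0 := by
        intro i
        rw [Pi.add_apply, add_mul, single_disjoint hkm s 1 i, single_disjoint hlm t 1 i,
          add_zero]
      rw [sqv_add_of_disjoint _ _ hd1, sqv_add_of_disjoint _ _ (single_disjoint hkl s t),
        sqv_single, sqv_single, sqv_single] at h
      simp only [Qfun_add_left, Qfun_add_right, Qfun_single_single] at h
      linear_combination h
    have e1 := inst 2 1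
    have e2 := inst 2 (-1)
    have e3 := inst (-2) 1
    have e4 := inst (-2) (-1)
    have e5 := inst 1 1
    have e6 := inst 1 (-1)
    have e7 := inst (-1) 1
    have e8 := inst (-1) (-1)
    simp only [hAs l k, hAs m k, hAs m l] at e1 e2 e3 e4 e5 e6 e7 e8
    linear_combination (e1 - e2 + e3 - e4 - e5 + e6 - e7 + e8) / 48
  · intro k l m p hkl hkm hkp hlm hlp hmp
    have inst : ∀ s t u : K,
        (A k k * s * s + A k l * s * t + A k m * s * u + A k p * s * (1:K) + A l k * t * s + A l l * t * t + A l m * t * u + A l p * t * (1:K) + A m k * u * s + A m l * u * t + A m m * u * u + A m p * u * (1:K) + A p k * (1:K) * s + A p l * (1:K) * t + A p m * (1:K) * u + A p p * (1:K) * (1:K)) * (A k k * s * s + A k l * s * t + A k m * s * u + A k p * s * (1:K) + A l k * t * s + A l l * t * t + A l m * t * u + A l p * t * (1:K) + A m k * u * s + A m l * u * t + A m m * u * u + A m p * u * (1:K) + A p k * (1:K) * s + A p l * (1:K) * t + A p m * (1:K) * u + A p p * (1:K) * (1:K))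
          = lam * (A k k * (s * s) * (s * s) + A k l * (s * s) * (t * t) + A k m * (s * s) * (u * u) + A k p * (s * s) * ((1:K) * (1:K)) + A l k * (t * t) * (s * s) + A l l * (t * t) * (t * t) + A l m * (t * t) * (u * u) + A l p * (t * t) * ((1:K) * (1:K)) + A m k * (u * u) * (s * s) + A m l * (u * u) * (t * t) + A m m * (u * u) * (u * u) + A m p * (u * u) * ((1:K) * (1:K)) + A p k * ((1:K) * (1:K)) * (s * s) + A p l * ((1:K) * (1:K)) * (t * t) + A p m * ((1:K) * (1:K)) * (u * u) + A p p * ((1:K) * (1:K)) * ((1:K) * (1:K))) := by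
      intro s t u
      have h := R2 (Pi.single k s + Pi.single l t + Pi.single m u + Pi.single p (1:K))
      have hd1 : ∀ i, (Pi.single k s + Pi.single l t + Pi.single m u : Fin n → K) i
          * (Pi.single p (1:K) : Fin n → K) i = 0 := by
        intro i
        rw [Pi.add_apply, Pi.add_apply, add_mul, add_mul, single_disjoint hkp s 1 i,
          single_disjoint hlp t 1 i, single_disjoint hmp u 1 i, add_zero, add_zero]
      have hd2 : ∀ i, (Pi.single k s + Pi.single l t : Fin n → K) i
          * (Pi.single m u : Fin n → K) i = 0 := by
        intro i
        rw [Pi.add_apply, add_mul, single_disjoint hkm s u i, single_disjoint hlm t u i,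
          add_zero]
      rw [sqv_add_of_disjoint _ _ hd1, sqv_add_of_disjoint _ _ hd2,
        sqv_add_of_disjoint _ _ (single_disjoint hkl s t),
        sqv_single, sqv_single, sqv_single, sqv_single] at h
      simp only [Qfun_add_left, Qfun_add_right, Qfun_single_single] at h
      linear_combination h
    have e1 := inst 1 1 1
    have e2 := inst 1 1 (-1)
    have e3 := inst 1 (-1) 1
    have e4 := inst 1 (-1) (-1)
    have e5 := inst (-1) 1 1
    have e6 := inst (-1) 1 (-1)
    have e7 := inst (-1) (-1) 1
    have e8 := inst (-1) (-1) (-1)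
    simp only [hAs l k, hAs m k, hAs m l, hAs p k, hAs p l, hAs p m] at e1 e2 e3 e4 e5 e6 e7 e8
    linear_combination (e1 - e2 - e3 + e4 - e5 + e6 + e7 - e8) / 64

section MainAux

variable {K : Type*} [Field K] [CharZero K] {n : ℕ}

theorem main_aux (f : (Fin n → K) → K)
    (hbi : ∀ X : Fin n → Fin n → K,
      f (fun i => f (X i)) = f (fun j => f (fun i => X i j)))
    (c : K) (b : Fin n → K) (A : Fin n → Fin n → K)
    (hAs : ∀ p q, A p q = A q p)
    (hexp : ∀ x, f x = c + Bfun b x + Qfun A x x) :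
    (∃ (k : Fin n) (u : Polynomial K), ∀ x, f x = u.eval (x k)) ∨
    (∀ p q, A p q = 0) ∨
    (∃ (a β : K) (k l : Fin n), k ≠ l ∧
      ∀ x, f x = a * ((x k + β) * (x l + β)) - β) := by
  classical
  have heval_scaled : ∀ (t : K) (z : Fin n → K),
      f (fun j => t * z j) = c + Bfun b z * t + Qfun A z z * (t * t) := by
    intro t z
    rw [hexp, Bfun_scale, Qfun_scale_left, Qfun_scale_right]
    ring
  have Ekey : ∀ y z : Fin n → K,
      c + (c * Bfun b onev + Bfun b z * Bfun b y + Qfun A z z * Bfun b (sqv y))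
        + (c * c * Qfun A onev onev
          + c * Bfun b z * Qfun A onev y + c * Qfun A z z * Qfun A onev (sqv y)
          + c * Bfun b z * Qfun A y onev + Bfun b z * Bfun b z * Qfun A y y
          + Bfun b z * Qfun A z z * Qfun A y (sqv y)
          + c * Qfun A z z * Qfun A (sqv y) onev
          + Bfun b z * Qfun A z z * Qfun A (sqv y) y
          + Qfun A z z * Qfun A z z * Qfun A (sqv y) (sqv y))
      = c + (c * Bfun b onev + Bfun b y * Bfun b z + Qfun A y y * Bfun b (sqv z))
        + (c * c * Qfun A onev onev
          + c * Bfun b y * Qfun A onev z + c * Qfun A y y * Qfun A onev (sqv z)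
          + c * Bfun b y * Qfun A z onev + Bfun b y * Bfun b y * Qfun A z z
          + Bfun b y * Qfun A y y * Qfun A z (sqv z)
          + c * Qfun A y y * Qfun A (sqv z) onev
          + Bfun b y * Qfun A y y * Qfun A (sqv z) z
          + Qfun A y y * Qfun A y y * Qfun A (sqv z) (sqv z)) := by
    intro y z
    have h := hbi (fun i j => y i * z j)
    have h1 : (fun i => f (fun j => y i * z j))
        = (fun i => c + Bfun b z * y i + Qfun A z z * (y i * y i)) :=
      funext fun i => heval_scaled (y i) z
    have h2 : (fun j => f (fun i => y i * z j))
        = (fun j => c + Bfun b y * z j + Qfun A y y * (z j * z j)) := by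
      funext j
      rw [show (fun i => y i * z j) = (fun i => z j * y i) from funext fun i => mul_comm _ _]
      exact heval_scaled (z j) y
    rw [h1, h2, hexp, hexp, key_expand_B, key_expand_Q, key_expand_B, key_expand_Q] at h
    linear_combination h
  have EkeyS : ∀ (u : K) (y z : Fin n → K),
      c + (c * Bfun b onev + Bfun b z * (u * Bfun b y)
          + Qfun A z z * (u * u * Bfun b (sqv y)))
        + (c * c * Qfun A onev onev
          + c * Bfun b z * (u * Qfun A onev y)
          + c * Qfun A z z * (u * u * Qfun A onev (sqv y))
          + c * Bfun b z * (u * Qfun A y onev)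
          + Bfun b z * Bfun b z * (u * u * Qfun A y y)
          + Bfun b z * Qfun A z z * (u * u * u * Qfun A y (sqv y))
          + c * Qfun A z z * (u * u * Qfun A (sqv y) onev)
          + Bfun b z * Qfun A z z * (u * u * u * Qfun A (sqv y) y)
          + Qfun A z z * Qfun A z z * (u * u * u * u * Qfun A (sqv y) (sqv y)))
      = c + (c * Bfun b onev + u * Bfun b y * Bfun b z
          + u * u * Qfun A y y * Bfun b (sqv z))
        + (c * c * Qfun A onev onev
          + c * (u * Bfun b y) * Qfun A onev z
          + c * (u * u * Qfun A y y) * Qfun A onev (sqv z)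
          + c * (u * Bfun b y) * Qfun A z onev
          + u * Bfun b y * (u * Bfun b y) * Qfun A z z
          + u * Bfun b y * (u * u * Qfun A y y) * Qfun A z (sqv z)
          + c * (u * u * Qfun A y y) * Qfun A (sqv z) onev
          + u * Bfun b y * (u * u * Qfun A y y) * Qfun A (sqv z) z
          + u * u * Qfun A y y * (u * u * Qfun A y y) * Qfun A (sqv z) (sqv z)) := by
    intro u y z
    have h := Ekey (fun i => u * y i) z
    simp only [Bfun_scale, Qfun_scale_left, Qfun_scale_right, sqv_scale] at h
    linear_combination h
  have R1 : ∀ y z : Fin n → K,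
      Qfun A z z * Qfun A z z * Qfun A (sqv y) (sqv y)
        = Qfun A y y * Qfun A y y * Qfun A (sqv z) (sqv z) := by
    intro y z
    have h0 := EkeyS 0 y z
    have h1 := EkeyS 1 y z
    have hm1 := EkeyS (-1) y z
    have h2 := EkeyS 2 y z
    have hm2 := EkeyS (-2) y z
    linear_combination (h2 + hm2 - 4 * h1 - 4 * hm1 + 6 * h0) / 24
  have R4 : ∀ y z : Fin n → K,
      Bfun b z * Qfun A z z * (Qfun A y (sqv y) + Qfun A (sqv y) y)
        = Bfun b y * Qfun A y y * (Qfun A z (sqv z) + Qfun A (sqv z) z) := by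
    intro y z
    have h1 := EkeyS 1 y z
    have hm1 := EkeyS (-1) y z
    have h2 := EkeyS 2 y z
    have hm2 := EkeyS (-2) y z
    linear_combination (h2 - hm2 - 2 * h1 + 2 * hm1) / 12
  have R3 : ∀ y z : Fin n → K,
      Qfun A z z * Bfun b (sqv y)
          + c * Qfun A z z * (Qfun A onev (sqv y) + Qfun A (sqv y) onev)
          + Bfun b z * Bfun b z * Qfun A y y
        = Qfun A y y * Bfun b (sqv z)
          + c * Qfun A y y * (Qfun A onev (sqv z) + Qfun A (sqv z) onev)
          + Bfun b y * Bfun b y * Qfun A z z := by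
    intro y z
    have h0 := EkeyS 0 y z
    have h1 := EkeyS 1 y z
    have hm1 := EkeyS (-1) y z
    have h2 := EkeyS 2 y z
    have hm2 := EkeyS (-2) y z
    linear_combination (16 * (h1 + hm1) - (h2 + hm2) - 30 * h0) / 24
  by_cases hQ0 : ∀ p q, A p q = 0
  · exact Or.inr (Or.inl hQ0)
  push_neg at hQ0
  obtain ⟨p0, q0, hpq0⟩ := hQ0
  by_cases hDiag : ∃ k, A k k ≠ 0
  · -- diagonal case : univariate
    obtain ⟨k, hk⟩ := hDiag
    have hz0 : sqv (Pi.single k (1:K)) = Pi.single k (1:K) := by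
      rw [sqv_single, one_mul]
    have R2 : ∀ y : Fin n → K, Qfun A y y * Qfun A y y
        = A k k * Qfun A (sqv y) (sqv y) := by
      intro y
      have h := R1 y (Pi.single k (1:K))
      rw [hz0, Qfun_single_single] at h
      apply mul_left_cancel₀ hk
      linear_combination -h
    obtain ⟨c1, c2, c3, c4, c5⟩ := relations A hAs (A k k) R2
    have hBk : ∀ l, l ≠ k → A k l = 0 := fun l hlk =>
      (mul_eq_zero.1 (c2 k l (fun h => hlk h.symm))).resolve_left hk
    have hDiag0 : ∀ l, l ≠ k → A l l = 0 := by
      intro l hlk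
      have h3 := c3 k l (fun h => hlk h.symm)
      rw [hBk l hlk] at h3
      have h3' : A k k * A l l = 0 := by linear_combination h3
      exact (mul_eq_zero.1 h3').resolve_left hk
    have hOff : ∀ l m, l ≠ k → m ≠ k → l ≠ m → A l m = 0 := by
      intro l m hlk hmk hlm
      have h4 := c4 k l m (fun h => hlk h.symm) (fun h => hmk h.symm) hlm
      rw [hBk l hlk, hBk m hmk] at h4
      have h4' : A k k * A l m = 0 := by linear_combination h4
      exact (mul_eq_zero.1 h4').resolve_left hk
    have hAz : ∀ p q, ¬(p = k ∧ q = k) → A p q = 0 := by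
      intro p q hpq
      by_cases hp : p = k
      · subst hp
        exact hBk q (fun h => hpq ⟨rfl, h⟩)
      · by_cases hq : q = k
        · subst hq
          rw [hAs]
          exact hBk p hp
        · by_cases hpq2 : p = q
          · subst hpq2; exact hDiag0 p hp
          · exact hOff p q hp hq hpq2
    have hbl : ∀ l, l ≠ k → b l = 0 := by
      intro l hlk
      have hkl : k ≠ l := fun h => hlk h.symm
      have h := R4 (Pi.single k (1:K) + Pi.single l 1) (Pi.single k (1:K))
      rw [sqv_add_of_disjoint _ _ (single_disjoint hkl 1 1), hz0, sqv_single] at h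
      simp only [Qfun_add_left, Qfun_add_right, Qfun_single_single, Bfun_add,
        Bfun_single] at h
      simp only [hAs l k, hBk l hlk, hDiag0 l hlk, mul_zero, zero_mul, add_zero,
        zero_add] at h
      have h2 : A k k * A k k * b l = 0 := by linear_combination (-1/2 : K) * h
      exact (mul_eq_zero.1 h2).resolve_left (mul_ne_zero hk hk)
    left
    refine ⟨k, Polynomial.C c + Polynomial.C (b k) * Polynomial.X
      + Polynomial.C (A k k) * Polynomial.X ^ 2, ?_⟩
    intro x
    have hB : Bfun b x = b k * x k := by
      rw [Bfun, Finset.sum_eq_single k]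
      · intro p _ hp; rw [hbl p hp, zero_mul]
      · intro h; exact absurd (Finset.mem_univ k) h
    have hQ : Qfun A x x = A k k * x k * x k := by
      rw [Qfun, Finset.sum_eq_single k]
      · rw [Finset.sum_eq_single k]
        · intro q _ hq; rw [hAz k q (fun hh => hq hh.2), zero_mul, zero_mul]
        · intro h; exact absurd (Finset.mem_univ k) h
      · intro p _ hp
        apply Finset.sum_eq_zero
        intro q _
        rw [hAz p q (fun hh => hp hh.1), zero_mul, zero_mul]
      · intro h; exact absurd (Finset.mem_univ k) h
    rw [hexp x, hB, hQ]
    simp only [Polynomial.eval_add, Polynomial.eval_mul, Polynomial.eval_pow,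
      Polynomial.eval_C, Polynomial.eval_X]
    ring
  · -- off-diagonal case : product form
    push_neg at hDiag
    have hkl : p0 ≠ q0 := by
      rintro rfl
      exact hpq0 (hDiag p0)
    set k := p0
    set l := q0
    have hdisj := single_disjoint (K := K) hkl 1 1
    have hz0 : sqv ((Pi.single k (1:K) + Pi.single l 1 : Fin n → K))
        = (Pi.single k (1:K) + Pi.single l 1 : Fin n → K) := by
      rw [sqv_add_of_disjoint _ _ hdisj, sqv_single, sqv_single, one_mul]
    have hlam : (2:K) * A k l ≠ 0 := mul_ne_zero two_ne_zero hpq0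
    have R2 : ∀ y : Fin n → K, Qfun A y y * Qfun A y y
        = (2 * A k l) * Qfun A (sqv y) (sqv y) := by
      intro y
      have h := R1 y (Pi.single k (1:K) + Pi.single l 1)
      rw [hz0] at h
      simp only [Qfun_add_left, Qfun_add_right, Qfun_single_single] at h
      rw [hDiag k, hDiag l, hAs l k] at h
      apply mul_left_cancel₀ hlam
      apply mul_left_cancel₀ hlam
      linear_combination (-2 * A k l) * h
    obtain ⟨c1, c2, c3, c4, c5⟩ := relations A hAs (2 * A k l) R2
    have hkm : ∀ m, m ≠ k → m ≠ l → A k m = 0 := by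
      intro m hmk hml
      have h4 := c4 k l m hkl (fun h => hmk h.symm) (fun h => hml h.symm)
      rw [hDiag k] at h4
      have h4' : A k l * A k m = 0 := by linear_combination h4 / 2
      exact (mul_eq_zero.1 h4').resolve_left hpq0
    have hlm : ∀ m, m ≠ k → m ≠ l → A l m = 0 := by
      intro m hmk hml
      have h4 := c4 l k m (fun h => hkl h.symm) (fun h => hml h.symm) (fun h => hmk h.symm)
      rw [hDiag l, hAs l k] at h4
      have h4' : A k l * A l m = 0 := by linear_combination h4 / 2
      exact (mul_eq_zero.1 h4').resolve_left hpq0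
    have hmp : ∀ m p, m ≠ k → m ≠ l → p ≠ k → p ≠ l → m ≠ p → A m p = 0 := by
      intro m p hmk hml hpk hpl hmp'
      have h5 := c5 k l m p hkl (fun h => hmk h.symm) (fun h => hpk h.symm)
        (fun h => hml h.symm) (fun h => hpl h.symm) hmp'
      rw [hkm m hmk hml, hkm p hpk hpl] at h5
      have h5' : A k l * A m p = 0 := by linear_combination h5
      exact (mul_eq_zero.1 h5').resolve_left hpq0
    have hAz : ∀ p q, ¬(p = k ∧ q = l) → ¬(p = l ∧ q = k) → A p q = 0 := by
      intro p q h1 h2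
      by_cases hpq' : p = q
      · subst hpq'; exact hDiag p
      · by_cases hp : p = k
        · subst hp
          exact hkm q (fun h => hpq' h.symm) (fun h => h1 ⟨rfl, h⟩)
        · by_cases hp2 : p = l
          · subst hp2
            exact hlm q (fun h => h2 ⟨rfl, h⟩) (fun h => hpq' h.symm)
          · by_cases hq : q = k
            · subst hq
              rw [hAs]
              exact hkm p hp hp2
            · by_cases hq2 : q = l
              · subst hq2
                rw [hAs]
                exact hlm p hp hp2
              · exact hmp p q hp hp2 hq hq2 hpq'
    -- linear part
    have hbm : ∀ m, m ≠ k → m ≠ l → b m = 0 := by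
      intro m hmk hml
      have hd1 : ∀ i, (Pi.single k (1:K) + Pi.single l 1 : Fin n → K) i
          * (Pi.single m (1:K) : Fin n → K) i = 0 := by
        intro i
        rw [Pi.add_apply, add_mul, single_disjoint (fun h => hmk h.symm) 1 1 i,
          single_disjoint (fun h => hml h.symm) 1 1 i, add_zero]
      have h := R4 (Pi.single k (1:K) + Pi.single l 1 + Pi.single m 1)
        (Pi.single k (1:K) + Pi.single l 1)
      rw [sqv_add_of_disjoint _ _ hd1, hz0, sqv_single, one_mul] at h
      simp only [Qfun_add_left, Qfun_add_right, Qfun_single_single, Bfun_add,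
        Bfun_single] at h
      simp only [hAs l k, hAs m k, hAs m l, hDiag k, hDiag l, hDiag m,
        hkm m (fun h => hmk h) hml, hlm m hmk hml, mul_zero, zero_mul, add_zero,
        zero_add] at h
      have h2 : A k l * A k l * b m = 0 := by linear_combination (-1/8 : K) * h
      exact (mul_eq_zero.1 h2).resolve_left (mul_ne_zero hpq0 hpq0)
    have hbkl : b k = b l := by
      have h := R4 (Pi.single k (1:K) + Pi.single l 2) (Pi.single k (1:K) + Pi.single l 1)
      rw [sqv_add_of_disjoint _ _ (single_disjoint hkl 1 2), hz0, sqv_single,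
        sqv_single, one_mul] at h
      simp only [Qfun_add_left, Qfun_add_right, Qfun_single_single, Bfun_add,
        Bfun_single] at h
      simp only [hAs l k, hDiag k, hDiag l, mul_zero, zero_mul, add_zero, zero_add] at h
      have h2 : A k l * A k l * (b k - b l) = 0 := by linear_combination h / 8
      have h3 := (mul_eq_zero.1 h2).resolve_left (mul_ne_zero hpq0 hpq0)
      exact sub_eq_zero.1 h3
    have hcolk : ∑ p, A p k = A l k := by
      rw [Finset.sum_eq_single l]
      · intro p _ hpl
        rcases eq_or_ne p k with rfl | hpk
        · exact hDiag p
        · rw [hAs p k]; exact hkm p hpk hpl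
      · intro h; exact absurd (Finset.mem_univ l) h
    have hcoll : ∑ p, A p l = A k l := by
      rw [Finset.sum_eq_single k]
      · intro p _ hpk
        rcases eq_or_ne p l with rfl | hpl
        · exact hDiag p
        · rw [hAs p l]; exact hlm p hpk hpl
      · intro h; exact absurd (Finset.mem_univ k) h
    have hrowk : ∑ q, A k q = A k l := by
      rw [Finset.sum_eq_single l]
      · intro q _ hql
        rcases eq_or_ne q k with rfl | hqk
        · exact hDiag q
        · exact hkm q hqk hql
      · intro h; exact absurd (Finset.mem_univ l) h
    have hrowl : ∑ q, A l q = A l k := by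
      rw [Finset.sum_eq_single k]
      · intro q _ hqk
        rcases eq_or_ne q l with rfl | hql
        · exact hDiag q
        · exact hlm q hqk hql
      · intro h; exact absurd (Finset.mem_univ k) h
    have hcc : (2 * A k l) * c = b k * b k - b k := by
      have h := R3 (Pi.single k (1:K)) (Pi.single k (1:K) + Pi.single l 1)
      rw [sqv_single, one_mul, hz0] at h
      simp only [Qfun_add_left, Qfun_add_right, Qfun_single_single, Bfun_add,
        Bfun_single, Qfun_onev_single, Qfun_single_onev] at h
      rw [hcolk, hcoll, hrowk, hrowl] at h
      simp only [hAs l k, hDiag k, hDiag l, mul_zero, zero_mul, add_zero, zero_add] at h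
      apply mul_left_cancel₀ hlam
      linear_combination h
    -- conclusion
    right; right
    refine ⟨2 * A k l, b k / (2 * A k l), k, l, hkl, ?_⟩
    intro x
    have hB : Bfun b x = b k * x k + b l * x l := by
      rw [Bfun, ← Finset.sum_subset (Finset.subset_univ {k, l})]
      · rw [Finset.sum_pair hkl]
      · intro p _ hp
        simp only [Finset.mem_insert, Finset.mem_singleton] at hp
        push_neg at hp
        rw [hbm p hp.1 hp.2, zero_mul]
    have hQ : Qfun A x x = A k l * x k * x l + A l k * x l * x k := by
      rw [Qfun, ← Finset.sum_subset (Finset.subset_univ {k, l})]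
      · rw [Finset.sum_pair hkl]
        congr 1
        · rw [Finset.sum_eq_single l]
          · intro q _ hql
            rcases eq_or_ne q k with rfl | hqk
            · rw [hDiag q, zero_mul, zero_mul]
            · rw [hkm q hqk hql, zero_mul, zero_mul]
          · intro h; exact absurd (Finset.mem_univ l) h
        · rw [Finset.sum_eq_single k]
          · intro q _ hqk
            rcases eq_or_ne q l with rfl | hql
            · rw [hDiag q, zero_mul, zero_mul]
            · rw [hlm q hqk hql, zero_mul, zero_mul]
          · intro h; exact absurd (Finset.mem_univ k) h
      · intro p _ hp
        simp only [Finset.mem_insert, Finset.mem_singleton] at hp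
        push_neg at hp
        apply Finset.sum_eq_zero
        intro q _
        rw [hAz p q (fun hh => hp.1 hh.1) (fun hh => hp.2 hh.1), zero_mul, zero_mul]
    rw [hexp x, hB, hQ, hAs l k, ← hbkl]
    have hc' : c = (b k * b k - b k) / (2 * A k l) := by
      rw [eq_div_iff hlam]
      linear_combination hcc
    rw [hc']
    field_simp
    ring




end MainAux

end BisymAux



/-- The Main Theorem for bisymmetric polynomial functions of degree at most 2 over a
field of characteristic zero. -/
theorem bisym_deg_le_two
    {K : Type*} [Field K] [CharZero K] {n : ℕ}
    (P : MvPolynomial (Fin n) K)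
    (hbi : Bisym fun x : Fin n → K => MvPolynomial.eval x P)
    (hdeg : P.totalDegree ≤ 2) :
    (∃ i : Fin n, ∃ u : Polynomial K,
        ∀ x : Fin n → K, MvPolynomial.eval x P = u.eval (x i)) ∨
    P.totalDegree ≤ 1 ∨
    (∃ a b : K, ∃ α : Fin n → ℕ, (∑ i, α i = 2) ∧
        ∀ x : Fin n → K,
          MvPolynomial.eval x P = a * (∏ i, (x i + b) ^ α i) - b) := by
  classical
  obtain ⟨c, b, A, hAs, hexp, hA1⟩ := BisymAux.exists_expansion P hdeg
  rcases BisymAux.main_aux (fun x => MvPolynomial.eval x P) hbi c b A hAs hexp with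
    ⟨k, u, hu⟩ | hA0 | ⟨a, β, k, l, hkl, hf⟩
  · exact Or.inl ⟨k, u, hu⟩
  · exact Or.inr (Or.inl (hA1 hA0))
  · right; right
    refine ⟨a, β, fun i => if i = k then 1 else if i = l then 1 else 0, ?_, ?_⟩
    · have hα : ∀ i : Fin n, (if i = k then 1 else if i = l then (1:ℕ) else 0)
          = (if i = k then 1 else 0) + (if i = l then 1 else 0) := by
        intro i
        by_cases h1 : i = k
        · subst h1
          rw [if_pos rfl, if_pos rfl, if_neg (fun h : i = l => hkl h), add_zero]
        · rw [if_neg h1, if_neg h1, zero_add]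
      calc ∑ i, (if i = k then 1 else if i = l then (1:ℕ) else 0)
          = ∑ i, ((if i = k then 1 else 0) + (if i = l then 1 else 0)) :=
            Finset.sum_congr rfl fun i _ => hα i
        _ = 2 := by
            rw [Finset.sum_add_distrib, Finset.sum_ite_eq' Finset.univ k fun _ => (1:ℕ),
              Finset.sum_ite_eq' Finset.univ l fun _ => (1:ℕ)]
            simp
    · intro x
      have hprod : ∏ i, (x i + β) ^ (if i = k then 1 else if i = l then 1 else 0)
          = (x k + β) * (x l + β) := by
        rw [← Finset.prod_subset (Finset.subset_univ {k, l})]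
        · rw [Finset.prod_pair hkl, if_pos rfl, if_neg (fun h : l = k => hkl h.symm),
            if_pos rfl, pow_one, pow_one]
        · intro i _ hi
          simp only [Finset.mem_insert, Finset.mem_singleton] at hi
          push_neg at hi
          rw [if_neg hi.1, if_neg hi.2, pow_zero]
      rw [hprod]
      exact hf x
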